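/- Let X be a Banach space and Y a reflexive closed subspace of X. Then for every x in X, the quotient norm of the coset x + Y in X/Y is attained: there exists y in Y such that ‖x + y‖ = ‖x + Y‖_{X/Y}. -/

import Mathlib

set_option maxHeartbeats 1000000


noncomputable section

/-- A Banach space is reflexive if the canonical inclusion into its double dual is surjective. -/
def IsReflexiveSpace (𝕜 X : Type*) [NontriviallyNormedField 𝕜] [NormedAddCommGroup X]
    [NormedSpace 𝕜 X] : Prop :=
  Function.Surjective (NormedSpace.inclusionInDoubleDual 𝕜 X)

/-- If `Y` is a reflexive closed subspace of a Banach space `X`, then the quotient norm of any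
coset `x + Y` in `X ⧸ Y` is attained: there is `y ∈ Y` with `‖x + y‖ = ‖x + Y‖`. -/
theorem quotient_norm_attained {X : Type*} [NormedAddCommGroup X] [NormedSpace ℂ X]
    [CompleteSpace X] (Y : Submodule ℂ X) [IsClosed (Y : Set X)]
    (hY : IsReflexiveSpace ℂ Y) (x : X) :
    ∃ y ∈ Y, ‖x + y‖ = ‖(Submodule.Quotient.mk x : X ⧸ Y)‖ := by
  set d : ℝ := ‖(Submodule.Quotient.mk x : X ⧸ Y)‖ with hd
  -- Step 1: a minimizing sequence in Y.
  have hseq : ∀ n : ℕ, ∃ y : Y, ‖x + (y : X)‖ < d + 1 / (n + 1) := by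
    intro n
    have hε : (0 : ℝ) < 1 / (n + 1) := by positivity
    obtain ⟨m, hm, hmlt⟩ :=
      Submodule.Quotient.norm_mk_lt (Submodule.Quotient.mk x : X ⧸ Y) hε
    have hmem : m - x ∈ Y := (Submodule.Quotient.eq Y).mp hm
    refine ⟨⟨m - x, hmem⟩, ?_⟩
    simpa [add_sub_cancel] using hmlt
  choose y hy using hseq
  -- Step 2: the sequence is bounded.
  have hbound : ∀ n : ℕ, ‖y n‖ ≤ ‖x‖ + d + 1 := by
    intro n
    have h1 : ‖(y n : X)‖ ≤ ‖x + (y n : X)‖ + ‖x‖ := by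
      have := norm_add_le (x + (y n : X)) (-x)
      simpa [add_comm, add_assoc] using this
    have h2 : (1 : ℝ) / (n + 1) ≤ 1 := by
      rw [div_le_one (by positivity)]
      linarith [Nat.cast_nonneg (α := ℝ) n]
    have := (hy n).le
    calc ‖y n‖ = ‖(y n : X)‖ := rfl
      _ ≤ ‖x + (y n : X)‖ + ‖x‖ := h1
      _ ≤ (d + 1 / (n + 1)) + ‖x‖ := by linarith
      _ ≤ ‖x‖ + d + 1 := by linarith
  -- Step 3: a weak-* cluster point in the double dual of Y.
  set J := NormedSpace.inclusionInDoubleDual ℂ ↥Y with hJ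
  set R : ℝ := ‖x‖ + d + 1 with hR
  have hcomp : IsCompact (WeakDual.toStrongDual ⁻¹'
      Metric.closedBall (0 : StrongDual ℂ (@StrongDual ℂ _ _ ↥Y _ _ NormedSpace.toModule)) R) :=
    WeakDual.isCompact_closedBall (𝕜 := ℂ) 0 R
  have hmem : ∀ n : ℕ, ((J (y n) : WeakDual ℂ (StrongDual ℂ ↥Y))) ∈
      (WeakDual.toStrongDual ⁻¹'
        Metric.closedBall (0 : StrongDual ℂ (@StrongDual ℂ _ _ ↥Y _ _ NormedSpace.toModule)) R) := by
    intro n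
    refine (mem_closedBall_zero_iff (E := StrongDual ℂ (@StrongDual ℂ _ _ ↥Y _ _ NormedSpace.toModule))).mpr ?_
    exact le_trans (NormedSpace.double_dual_bound ℂ ↥Y (y n)) (hbound n)
  obtain ⟨ψ, -, hψ⟩ := hcomp.exists_mapClusterPt
    (u := fun n : ℕ => (J (y n) : WeakDual ℂ (StrongDual ℂ ↥Y)))
    (f := Filter.atTop)
    (Filter.le_principal_iff.mpr (Filter.mem_map.mpr (Filter.Eventually.of_forall hmem)))
  -- Step 4: reflexivity gives a preimage y₀ in Y.
  obtain ⟨y₀, hy₀⟩ := hY (WeakDual.toStrongDual ψ)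
  refine ⟨y₀, y₀.2, le_antisymm ?_ ?_⟩
  · -- ‖x + y₀‖ ≤ d
    rcases eq_or_ne (x + (y₀ : X)) 0 with h0 | h0
    · rw [h0, norm_zero]; exact norm_nonneg _
    obtain ⟨f, hf1, hfx⟩ := exists_dual_vector ℂ (x + (y₀ : X)) (norm_ne_zero_iff.mpr h0)
    -- restriction of f to Y
    set g : StrongDual ℂ ↥Y := f.comp Y.subtypeL with hg
    -- evaluation at g is weak-* continuous; get cluster point of scalars
    have hcont : Continuous fun φ : WeakDual ℂ (StrongDual ℂ ↥Y) => φ g :=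
      WeakDual.eval_continuous g
    have hclus : MapClusterPt (ψ g) Filter.atTop
        (fun n : ℕ => (J (y n) : WeakDual ℂ (StrongDual ℂ ↥Y)) g) :=
      hψ.continuousAt_comp hcont.continuousAt
    have hval : ∀ n : ℕ, (J (y n) : WeakDual ℂ (StrongDual ℂ ↥Y)) g
        = f (x + (y n : X)) - f x := by
      intro n
      have : (J (y n) : WeakDual ℂ (StrongDual ℂ ↥Y)) g = g (y n) := rfl
      rw [this]
      simp [hg, map_add]
    have hψg : ψ g = f (x + (y₀ : X)) - f x := by
      have h1 : ψ g = g y₀ := by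
        have := congrArg (fun φ : StrongDual ℂ (StrongDual ℂ ↥Y) => φ g) hy₀
        exact this.symm
      rw [h1]
      simp [hg, map_add]
    -- hence f(x+y₀) is a cluster point of f(x + y n)
    have hclus2 : MapClusterPt (f (x + (y₀ : X))) Filter.atTop
        (fun n : ℕ => f (x + (y n : X))) := by
      have := hclus.continuousAt_comp (f := fun z : ℂ => z + f x)
        (continuous_add_right (f x)).continuousAt
      simp only [Function.comp_def, hval, hψg, sub_add_cancel] at this
      exact this
    -- bound the cluster point
    have key : ∀ ε > (0 : ℝ), ‖f (x + (y₀ : X))‖ ≤ d + ε := by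
      intro ε hε
      obtain ⟨N, hN⟩ := exists_nat_one_div_lt (by linarith : (0:ℝ) < ε / 2)
      have hfreq := (mapClusterPt_iff_frequently.mp hclus2) (Metric.ball (f (x + (y₀ : X))) (ε / 2))
        (Metric.ball_mem_nhds _ (by linarith))
      obtain ⟨n, hnN, hn⟩ := (hfreq.and_eventually (Filter.eventually_ge_atTop N)).exists
      have h1 : ‖f (x + (y₀ : X)) - f (x + (y n : X))‖ < ε / 2 := by
        rw [Metric.mem_ball, dist_comm, dist_eq_norm] at hnN
        exact hnN
      have h2 : ‖f (x + (y n : X))‖ ≤ ‖x + (y n : X)‖ := by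
        calc ‖f (x + (y n : X))‖ ≤ ‖f‖ * ‖x + (y n : X)‖ := f.le_opNorm _
          _ = ‖x + (y n : X)‖ := by rw [hf1, one_mul]
      have h3 : ‖x + (y n : X)‖ < d + 1 / (n + 1) := hy n
      have h4 : (1 : ℝ) / (n + 1) ≤ 1 / (N + 1) := by
        apply one_div_le_one_div_of_le (by positivity)
        have : (N : ℝ) ≤ n := Nat.cast_le.mpr hn
        linarith
      have h5 : (1 : ℝ) / (N + 1) < ε / 2 := hN
      calc ‖f (x + (y₀ : X))‖
          ≤ ‖f (x + (y₀ : X)) - f (x + (y n : X))‖ + ‖f (x + (y n : X))‖ := by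
            have := norm_add_le (f (x + (y₀ : X)) - f (x + (y n : X))) (f (x + (y n : X)))
            rwa [sub_add_cancel] at this
        _ ≤ ε / 2 + (d + 1 / (n + 1)) := by linarith
        _ ≤ ε / 2 + (d + ε / 2) := by linarith
        _ = d + ε := by ring
    have hnorm : ‖f (x + (y₀ : X))‖ = ‖x + (y₀ : X)‖ := by
      rw [hfx]
      simp [abs_of_nonneg (norm_nonneg (x + (y₀ : X)))]
    rw [← hnorm]
    exact le_of_forall_pos_le_add key
  · -- d ≤ ‖x + y₀‖
    have : (Submodule.Quotient.mk (x + (y₀ : X)) : X ⧸ Y)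
        = Submodule.Quotient.mk x := by
      rw [Submodule.Quotient.eq]
      simpa using y₀.2
    calc d = ‖(Submodule.Quotient.mk (x + (y₀ : X)) : X ⧸ Y)‖ := by rw [this]
      _ ≤ ‖x + (y₀ : X)‖ := Submodule.Quotient.norm_mk_le _ _
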